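/- For every element A of the Lorentz Lie algebra so(3,1) (i.e. every real 4×4 matrix A with Aᵀη = −ηA), the matrix exponential exp(A) is orthochronous: its top-left (time-time) entry satisfies (exp A)₀₀ ≥ 1. Hence the matrix exponential of so(3,1) lands in the proper orthochronous Lorentz group SO(3,1)₊. -/

import Mathlib

open Matrix

/-- The Minkowski metric `η = diag(−1, 1, 1, 1)` on `ℝ⁴`. -/
def minkowskiEta : Matrix (Fin 4) (Fin 4) ℝ := Matrix.diagonal ![-1, 1, 1, 1]

lemma eta_mul_eta : minkowskiEta * minkowskiEta = 1 := by
  ext i j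
  fin_cases i <;> fin_cases j <;>
    simp [minkowskiEta, Matrix.mul_apply, Fin.sum_univ_four, Matrix.diagonal, Matrix.one_apply]

lemma eta_det : minkowskiEta.det = -1 := by
  simp [minkowskiEta, Matrix.det_diagonal, Fin.prod_univ_four]

lemma exp_lorentz {B : Matrix (Fin 4) (Fin 4) ℝ}
    (hB : Bᵀ * minkowskiEta = -(minkowskiEta * B)) :
    (NormedSpace.exp B)ᵀ * minkowskiEta * NormedSpace.exp B = minkowskiEta := by
  have hη := eta_mul_eta
  have hinv : minkowskiEta⁻¹ = minkowskiEta := Matrix.inv_eq_right_inv hη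
  have hU : IsUnit minkowskiEta := ⟨⟨minkowskiEta, minkowskiEta, hη, hη⟩, rfl⟩
  have hBt : Bᵀ = minkowskiEta * (-B) * minkowskiEta⁻¹ := by
    rw [hinv]
    calc Bᵀ = Bᵀ * (minkowskiEta * minkowskiEta) := by rw [hη, mul_one]
      _ = (Bᵀ * minkowskiEta) * minkowskiEta := by rw [mul_assoc]
      _ = (-(minkowskiEta * B)) * minkowskiEta := by rw [hB]
      _ = minkowskiEta * (-B) * minkowskiEta := by noncomm_ring
  have hexp : (NormedSpace.exp B)ᵀ = minkowskiEta * NormedSpace.exp (-B) * minkowskiEta := by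
    rw [← Matrix.exp_transpose, hBt, Matrix.exp_conj _ _ hU, hinv]
  have hmul : NormedSpace.exp (-B) * NormedSpace.exp B = 1 := by
    rw [← Matrix.exp_add_of_commute (-B) B (Commute.refl B).neg_left, neg_add_cancel,
      NormedSpace.exp_zero]
  calc (NormedSpace.exp B)ᵀ * minkowskiEta * NormedSpace.exp B
      = minkowskiEta * NormedSpace.exp (-B) * (minkowskiEta * minkowskiEta) *
        NormedSpace.exp B := by rw [hexp]; noncomm_ring
    _ = minkowskiEta * (NormedSpace.exp (-B) * NormedSpace.exp B) := by
        rw [hη]; noncomm_ring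
    _ = minkowskiEta := by rw [hmul, mul_one]

lemma lorentz_col {Λ : Matrix (Fin 4) (Fin 4) ℝ}
    (h : Λᵀ * minkowskiEta * Λ = minkowskiEta) :
    Λ 0 0 ^ 2 = 1 + (Λ 1 0 ^ 2 + Λ 2 0 ^ 2 + Λ 3 0 ^ 2) := by
  have h00 := congrFun (congrFun h 0) 0
  simp [Matrix.mul_apply, minkowskiEta, Fin.sum_univ_four, Matrix.diagonal] at h00
  nlinarith [h00]

lemma lorentz_row {Λ : Matrix (Fin 4) (Fin 4) ℝ}
    (h : Λᵀ * minkowskiEta * Λ = minkowskiEta) :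
    Λ 0 0 ^ 2 = 1 + (Λ 0 1 ^ 2 + Λ 0 2 ^ 2 + Λ 0 3 ^ 2) := by
  have hη := eta_mul_eta
  have h1 : (minkowskiEta * Λᵀ * minkowskiEta) * Λ = 1 := by
    calc (minkowskiEta * Λᵀ * minkowskiEta) * Λ
        = minkowskiEta * (Λᵀ * minkowskiEta * Λ) := by noncomm_ring
      _ = 1 := by rw [h, hη]
  have h2 : Λ * (minkowskiEta * Λᵀ * minkowskiEta) = 1 := mul_eq_one_comm.mp h1
  have h3 : Λᵀᵀ * minkowskiEta * Λᵀ = minkowskiEta := by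
    rw [Matrix.transpose_transpose]
    calc Λ * minkowskiEta * Λᵀ
        = Λ * (minkowskiEta * Λᵀ * minkowskiEta) * minkowskiEta := by
          simp only [mul_assoc, hη, mul_one]
      _ = minkowskiEta := by rw [h2, one_mul]
  have := lorentz_col h3
  simpa using this

/-- For every `A ∈ so(3,1)` (i.e. `Aᵀ η = −η A`), the matrix exponential `exp A` is
orthochronous: `(exp A)₀₀ ≥ 1`. Hence `exp` lands in the proper orthochronous Lorentz
group `SO(3,1)₊`: `exp A` preserves `η`, has determinant `1`, and is orthochronous. -/
theorem exp_lorentz_algebra_orthochronous (A : Matrix (Fin 4) (Fin 4) ℝ)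
    (hA : Aᵀ * minkowskiEta = -(minkowskiEta * A)) :
    1 ≤ NormedSpace.exp A 0 0 ∧
    (NormedSpace.exp A)ᵀ * minkowskiEta * NormedSpace.exp A = minkowskiEta ∧
    (NormedSpace.exp A).det = 1 := by
  have hL : (NormedSpace.exp A)ᵀ * minkowskiEta * NormedSpace.exp A = minkowskiEta :=
    exp_lorentz hA
  set C := NormedSpace.exp ((2:ℝ)⁻¹ • A) with hCdef
  have hC : ((2:ℝ)⁻¹ • A)ᵀ * minkowskiEta = -(minkowskiEta * ((2:ℝ)⁻¹ • A)) := by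
    rw [Matrix.transpose_smul, Matrix.smul_mul, hA, Matrix.mul_smul, smul_neg]
  have hCC : NormedSpace.exp A = C * C := by
    rw [hCdef, ← Matrix.exp_add_of_commute _ _ (Commute.refl _), ← add_smul]
    norm_num
  have hCL := exp_lorentz hC
  have hcol := lorentz_col hCL
  have hrow := lorentz_row hCL
  rw [← hCdef] at hcol hrow
  have hentry : NormedSpace.exp A 0 0 =
      C 0 0 * C 0 0 + C 0 1 * C 1 0 + C 0 2 * C 2 0 + C 0 3 * C 3 0 := by
    rw [hCC, Matrix.mul_apply, Fin.sum_univ_four]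
  refine ⟨?_, hL, ?_⟩
  · rw [hentry]
    nlinarith [sq_nonneg (C 0 1 + C 1 0), sq_nonneg (C 0 2 + C 2 0), sq_nonneg (C 0 3 + C 3 0)]
  · have hdet := congrArg Matrix.det hL
    rw [Matrix.det_mul, Matrix.det_mul, Matrix.det_transpose, eta_det] at hdet
    have hdc : (NormedSpace.exp A).det = C.det * C.det := by rw [hCC, Matrix.det_mul]
    nlinarith [sq_nonneg (C.det * C.det - 1), sq_nonneg (C.det * C.det + 1), sq_nonneg C.det]
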